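/- Under (A2), if for every x₀ ∈ X and y ∈ Y the map x ↦ R̃(x₀,x) is continuous and x ↦ A(x,y) is demicontinuous, then the operator S x := A(x, R x), where R x := R̃(x,x), is demicontinuous (i.e. x_n → x implies S x_n ⇀ S x). -/

import Mathlib

open Filter Topology

/-- Under (A2), if `x ↦ R̃(x₀,x)` is continuous and `x ↦ A(x,y)` is
demicontinuous (for every `x₀ ∈ X`, `y ∈ Y`), then the reduced operator
`S x := A(x, R x)` with `R x := R̃(x,x)` is demicontinuous. -/
theorem reduced_operator_demicontinuous {X Y : Type*}
    [NormedAddCommGroup X] [NormedSpace ℝ X]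
    [NormedAddCommGroup Y] [NormedSpace ℝ Y]
    (A : X → X → Y → (X →L[ℝ] ℝ)) (B : X → X → Y → (Y →L[ℝ] ℝ)) (y₀ : Y →L[ℝ] ℝ)
    (αB βA βB : ℝ) (hαB : 0 < αB) (hβA : 0 ≤ βA) (hβB : 0 ≤ βB)
    -- (A1.3) uniform strong monotonicity of `y ↦ B̃(x₁,x₂,y)`
    (hBmono : ∀ (x₁ x₂ : X) (y₁ y₂ : Y),
      αB * ‖y₁ - y₂‖ ^ 2 ≤ (B x₁ x₂ y₁ - B x₁ x₂ y₂) (y₁ - y₂))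
    -- (A1.3) radial continuity of `y ↦ B̃(x₁,x₂,y)`
    (hBrad : ∀ (x₁ x₂ : X) (y v : Y),
      ContinuousAt (fun t : ℝ => B x₁ x₂ (y + t • v) v) 0)
    -- (A2.2)
    (hAlip : ∀ (x₁ x₂ : X) (y₁ y₂ : Y),
      ‖A x₁ x₂ y₁ - A x₁ x₂ y₂‖ ≤ βA * ‖y₁ - y₂‖)
    -- (A2.3)
    (hBlip : ∀ (x₁ x₂ : X) (y : Y),
      ‖B x₁ x₂ y - B x₂ x₂ y‖ ≤ βB * ‖x₁ - x₂‖)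
    -- `R̃(x₁,x₂)` is the solution of `B̃(x₁,x₂, ·) = y₀*`
    (R : X → X → Y) (hR : ∀ x₁ x₂ : X, B x₁ x₂ (R x₁ x₂) = y₀)
    -- `x ↦ R̃(x₀,x)` is continuous for every `x₀`
    (hRcont : ∀ x₀ : X, Continuous (fun x => R x₀ x))
    -- `x ↦ A(x,y) = Ã(x,x,y)` is demicontinuous for every `y`
    (hAdemi : ∀ (y : Y) (x : ℕ → X) (xl : X), Tendsto x atTop (𝓝 xl) →
      ∀ v : X, Tendsto (fun n => A (x n) (x n) y v) atTop (𝓝 (A xl xl y v))) :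
    -- `S` is demicontinuous
    ∀ (x : ℕ → X) (xl : X), Tendsto x atTop (𝓝 xl) →
      ∀ v : X, Tendsto (fun n => A (x n) (x n) (R (x n) (x n)) v) atTop
        (𝓝 (A xl xl (R xl xl) v)) := by
  intro x xl hx v
  -- Step 1: Lipschitz estimate ‖R x₁ x₂ - R x₂ x₂‖ ≤ (βB/αB) ‖x₁ - x₂‖
  have hRlip : ∀ x₁ x₂ : X, ‖R x₂ x₂ - R x₁ x₂‖ ≤ (βB / αB) * ‖x₁ - x₂‖ := by
    intro x₁ x₂
    set y₁ := R x₂ x₂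
    set y₂ := R x₁ x₂
    have key : αB * ‖y₁ - y₂‖ ^ 2 ≤ βB * ‖x₁ - x₂‖ * ‖y₁ - y₂‖ := by
      have h1 := hBmono x₁ x₂ y₁ y₂
      have heq : (B x₁ x₂ y₁ - B x₁ x₂ y₂) (y₁ - y₂)
          = (B x₁ x₂ y₁ - B x₂ x₂ y₁) (y₁ - y₂) := by
        rw [hR x₁ x₂, hR x₂ x₂]
      have h2 : (B x₁ x₂ y₁ - B x₂ x₂ y₁) (y₁ - y₂)
          ≤ βB * ‖x₁ - x₂‖ * ‖y₁ - y₂‖ := by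
        calc (B x₁ x₂ y₁ - B x₂ x₂ y₁) (y₁ - y₂)
            ≤ ‖(B x₁ x₂ y₁ - B x₂ x₂ y₁) (y₁ - y₂)‖ := le_abs_self _
          _ ≤ ‖B x₁ x₂ y₁ - B x₂ x₂ y₁‖ * ‖y₁ - y₂‖ :=
              (B x₁ x₂ y₁ - B x₂ x₂ y₁).le_opNorm _
          _ ≤ βB * ‖x₁ - x₂‖ * ‖y₁ - y₂‖ :=
              mul_le_mul_of_nonneg_right (hBlip x₁ x₂ y₁) (norm_nonneg _)
      linarith [heq ▸ h1]
    rcases eq_or_lt_of_le (norm_nonneg (y₁ - y₂)) with h0 | h0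
    · rw [← h0]
      positivity
    · have : αB * ‖y₁ - y₂‖ ≤ βB * ‖x₁ - x₂‖ := by
        have := (mul_le_mul_iff_of_pos_right h0).mp (by nlinarith : αB * ‖y₁ - y₂‖ * ‖y₁ - y₂‖ ≤ βB * ‖x₁ - x₂‖ * ‖y₁ - y₂‖)
        exact this
      rw [div_mul_eq_mul_div, le_div_iff₀ hαB]
      nlinarith
  -- Step 2: R (x n) (x n) → R xl xl
  have hRt : Tendsto (fun n => R (x n) (x n)) atTop (𝓝 (R xl xl)) := by
    have h1 : Tendsto (fun n => R xl (x n)) atTop (𝓝 (R xl xl)) :=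
      ((hRcont xl).continuousAt).tendsto.comp hx
    have h2 : Tendsto (fun n => R (x n) (x n) - R xl (x n)) atTop (𝓝 0) := by
      rw [tendsto_zero_iff_norm_tendsto_zero]
      have hb : Tendsto (fun n => (βB / αB) * ‖xl - x n‖) atTop (𝓝 ((βB / αB) * 0)) := by
        apply Tendsto.const_mul
        rw [← tendsto_zero_iff_norm_tendsto_zero]
        simpa using (tendsto_const_nhds.sub hx : Tendsto (fun n => xl - x n) atTop (𝓝 (xl - xl)))
      rw [mul_zero] at hb
      exact squeeze_zero (fun n => norm_nonneg _) (fun n => hRlip xl (x n)) hb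
    have := h2.add h1
    simpa using this
  -- Step 3: combine
  have hterm1 : Tendsto (fun n => A (x n) (x n) (R (x n) (x n)) v
      - A (x n) (x n) (R xl xl) v) atTop (𝓝 0) := by
    rw [tendsto_zero_iff_norm_tendsto_zero]
    have hb : Tendsto (fun n => βA * ‖R (x n) (x n) - R xl xl‖ * ‖v‖) atTop
        (𝓝 (βA * 0 * ‖v‖)) := by
      apply Tendsto.mul_const
      apply Tendsto.const_mul
      rw [← tendsto_zero_iff_norm_tendsto_zero]
      simpa using hRt.sub_const (R xl xl)
    rw [mul_zero, zero_mul] at hb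
    refine squeeze_zero (fun n => norm_nonneg _) (fun n => ?_) hb
    calc ‖A (x n) (x n) (R (x n) (x n)) v - A (x n) (x n) (R xl xl) v‖
        = ‖(A (x n) (x n) (R (x n) (x n)) - A (x n) (x n) (R xl xl)) v‖ := by
          simp
      _ ≤ ‖A (x n) (x n) (R (x n) (x n)) - A (x n) (x n) (R xl xl)‖ * ‖v‖ :=
          ContinuousLinearMap.le_opNorm _ _
      _ ≤ βA * ‖R (x n) (x n) - R xl xl‖ * ‖v‖ :=
          mul_le_mul_of_nonneg_right (hAlip _ _ _ _) (norm_nonneg _)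
  have hterm2 := hAdemi (R xl xl) x xl hx v
  have := hterm1.add hterm2
  simpa using this
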